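/- Fix disjoint finite sets S, P and a subspace T of ℂ^{S⊎P}. Let V₁, V₂ ⊆ ℂ^S × ℂ^S be ℂ-linear subspaces that are adjoints of each other, i.e. V₂ = V₁^adj. Then their port behaviours relative to T are adjoints of each other: B(V₂) = (B(V₁))^adj, where on the right the adjoint is taken in ℂ^P × ℂ^P. -/

import Mathlib

/-!
STATEMENT 7: Fix disjoint finite sets S, P and a subspace T of ℂ^{S⊎P}. Let
V₁, V₂ ⊆ ℂ^S × ℂ^S be ℂ-linear subspaces that are adjoints of each other, i.e.
V₂ = V₁^adj where V^adj := {(v,i) : (−i,v) ∈ V^⊥}. Then their port behaviours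
relative to T are adjoints of each other: B(V₂) = (B(V₁))^adj, the adjoint on the
right being taken in ℂ^P × ℂ^P.
-/

/-- Hermitian inner product on `ℂ^X`: `⟨f,g⟩ = Σ_e f e * conj (g e)`. -/
noncomputable def hinner {X : Type*} [Fintype X] (f g : X → ℂ) : ℂ :=
  ∑ e, f e * (starRingEnd ℂ) (g e)

/-- Orthogonal complement (as a set) in `ℂ^X × ℂ^Y` with inner product
`⟨(f₁,f₂),(g₁,g₂)⟩ = ⟨f₁,g₁⟩ + ⟨f₂,g₂⟩`. -/
def pperp {X Y : Type*} [Fintype X] [Fintype Y] (K : Set ((X → ℂ) × (Y → ℂ))) :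
    Set ((X → ℂ) × (Y → ℂ)) :=
  {g | ∀ f ∈ K, hinner f.1 g.1 + hinner f.2 g.2 = 0}

/-- Adjoint of a collection of voltage-current pairs:
`K^adj := {(v,i) : (−i,v) ∈ K^⊥}`. -/
def adjSet {X : Type*} [Fintype X] (K : Set ((X → ℂ) × (X → ℂ))) :
    Set ((X → ℂ) × (X → ℂ)) :=
  {w | (-w.2, w.1) ∈ pperp K}

/-- The port behaviour of a device characteristic `K ⊆ ℂ^S × ℂ^S` relative to the
KVL space `T ⊆ ℂ^{S⊎P}` (with KCL space `T^⊥`). -/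
def portB {S P : Type*} [Fintype S] [Fintype P]
    (T : Submodule ℂ ((S → ℂ) × (P → ℂ))) (K : Set ((S → ℂ) × (S → ℂ))) :
    Set ((P → ℂ) × (P → ℂ)) :=
  {w | ∃ (vS iS : S → ℂ) (vP iP : P → ℂ),
      (vS, iS) ∈ K ∧ (vS, vP) ∈ T ∧
      (iS, iP) ∈ pperp (T : Set ((S → ℂ) × (P → ℂ))) ∧ w = (vP, -iP)}

namespace St7

lemma hinner_zero_left {X : Type*} [Fintype X] (g : X → ℂ) : hinner 0 g = 0 := by
  simp [hinner]
lemma hinner_zero_right {X : Type*} [Fintype X] (f : X → ℂ) : hinner f 0 = 0 := by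
  simp [hinner]
lemma hinner_neg_left {X : Type*} [Fintype X] (f g : X → ℂ) :
    hinner (-f) g = -hinner f g := by
  simp [hinner, Finset.sum_neg_distrib]
lemma hinner_neg_right {X : Type*} [Fintype X] (f g : X → ℂ) :
    hinner f (-g) = -hinner f g := by
  simp [hinner, mul_neg]

section general
variable {E : Type*} [AddCommGroup E] [Module ℂ E] {Z : Type*} [Fintype Z]
  (ι : E ≃ₗ[ℂ] EuclideanSpace ℂ Z)

/-- Orthogonal-complement submodule pulled back through a linear identification
with a Euclidean space. -/
noncomputable def perpS (M : Submodule ℂ E) : Submodule ℂ E :=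
  ((M.map (ι : E →ₗ[ℂ] EuclideanSpace ℂ Z))ᗮ).comap (ι : E →ₗ[ℂ] EuclideanSpace ℂ Z)

lemma mem_perpS {M : Submodule ℂ E} {x : E} :
    x ∈ perpS ι M ↔ ∀ f ∈ M, (inner ℂ (ι x) (ι f) : ℂ) = 0 := by
  simp only [perpS, Submodule.mem_comap, Submodule.mem_orthogonal']
  constructor
  · intro h f hf; exact h (ι f) ⟨f, hf, rfl⟩
  · rintro h _ ⟨f, hf, rfl⟩; exact h f hf

lemma perpS_perpS (M : Submodule ℂ E) : perpS ι (perpS ι M) = M := by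
  unfold perpS
  rw [Submodule.map_comap_eq_of_surjective (f := (ι : E →ₗ[ℂ] EuclideanSpace ℂ Z))
    (LinearEquiv.surjective ι), Submodule.orthogonal_orthogonal]
  exact Submodule.comap_map_eq_of_injective (f := (ι : E →ₗ[ℂ] EuclideanSpace ℂ Z))
    (LinearEquiv.injective ι) M

lemma perpS_sup (M N : Submodule ℂ E) :
    perpS ι (M ⊔ N) = perpS ι M ⊓ perpS ι N := by
  unfold perpS
  rw [Submodule.map_sup, ← Submodule.inf_orthogonal, Submodule.comap_inf]

end general

/-- Identification of `ℂ^X × ℂ^Y` with `ℂ^{X⊎Y}`. -/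
noncomputable def sumEquiv (X Y : Type*) : ((X → ℂ) × (Y → ℂ)) ≃ₗ[ℂ] EuclideanSpace ℂ (X ⊕ Y) where
  toFun p := WithLp.toLp 2 (Sum.elim p.1 p.2)
  invFun f := (fun x => f (Sum.inl x), fun y => f (Sum.inr y))
  map_add' p q := by ext z; cases z <;> rfl
  map_smul' c p := by ext z; cases z <;> rfl
  left_inv p := rfl
  right_inv f := by ext z; cases z <;> rfl

lemma inner_sumEquiv {X Y : Type*} [Fintype X] [Fintype Y] (x f : (X → ℂ) × (Y → ℂ)) :
    (inner ℂ ((sumEquiv X Y) x) ((sumEquiv X Y) f) : ℂ)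
      = hinner f.1 x.1 + hinner f.2 x.2 := by
  simp only [PiLp.inner_apply, RCLike.inner_apply, hinner]
  rw [Fintype.sum_sum_type]
  simp [sumEquiv, LinearEquiv.coe_mk, LinearMap.coe_mk, AddHom.coe_mk, mul_comm]
  rfl

/-- Submodule version of `pperp`. -/
noncomputable def pperpS {X Y : Type*} [Fintype X] [Fintype Y]
    (M : Submodule ℂ ((X → ℂ) × (Y → ℂ))) : Submodule ℂ ((X → ℂ) × (Y → ℂ)) :=
  perpS (sumEquiv X Y) M

lemma mem_pperpS {X Y : Type*} [Fintype X] [Fintype Y]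
    {M : Submodule ℂ ((X → ℂ) × (Y → ℂ))} {x : (X → ℂ) × (Y → ℂ)} :
    x ∈ pperpS M ↔ x ∈ pperp (M : Set ((X → ℂ) × (Y → ℂ))) := by
  rw [pperpS, mem_perpS]
  constructor
  · intro h f hf
    have := h f hf; rwa [inner_sumEquiv] at this
  · intro h f hf
    rw [inner_sumEquiv]; exact h f hf

lemma pperpS_pperpS {X Y : Type*} [Fintype X] [Fintype Y]
    (M : Submodule ℂ ((X → ℂ) × (Y → ℂ))) : pperpS (pperpS M) = M :=
  perpS_perpS _ M

section main

variable {S P : Type*} [Fintype S] [Fintype P]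

/-- The ambient 4-fold space `(v_S, i_S, v_P, i_P)`. -/
abbrev H4 (S P : Type*) := (((S → ℂ) × (S → ℂ)) × ((P → ℂ) × (P → ℂ)))

/-- Identification of the 4-fold space with a Euclidean space. -/
noncomputable def quadEquiv (S P : Type*) :
    H4 S P ≃ₗ[ℂ] EuclideanSpace ℂ ((S ⊕ S) ⊕ (P ⊕ P)) where
  toFun q := WithLp.toLp 2 (Sum.elim (Sum.elim q.1.1 q.1.2) (Sum.elim q.2.1 q.2.2))
  invFun f := ((fun s => f (.inl (.inl s)), fun s => f (.inl (.inr s))),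
               (fun p => f (.inr (.inl p)), fun p => f (.inr (.inr p))))
  map_add' p q := by ext z; rcases z with (z|z)|(z|z) <;> rfl
  map_smul' c p := by ext z; rcases z with (z|z)|(z|z) <;> rfl
  left_inv p := rfl
  right_inv f := by ext z; rcases z with (z|z)|(z|z) <;> rfl

lemma inner_quadEquiv (x f : H4 S P) :
    (inner ℂ ((quadEquiv S P) x) ((quadEquiv S P) f) : ℂ)
      = hinner f.1.1 x.1.1 + hinner f.1.2 x.1.2 + hinner f.2.1 x.2.1 + hinner f.2.2 x.2.2 := by
  simp only [PiLp.inner_apply, RCLike.inner_apply, hinner]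
  rw [Fintype.sum_sum_type, Fintype.sum_sum_type, Fintype.sum_sum_type]
  simp [quadEquiv, LinearEquiv.coe_mk, LinearMap.coe_mk, AddHom.coe_mk, mul_comm, add_assoc]
  rfl

/-- Projection onto coordinates 1 and 3. -/
noncomputable def l13 (S P : Type*) : H4 S P →ₗ[ℂ] ((S → ℂ) × (P → ℂ)) :=
  LinearMap.prod ((LinearMap.fst ℂ _ _).comp (LinearMap.fst ℂ _ _))
    ((LinearMap.fst ℂ _ _).comp (LinearMap.snd ℂ _ _))

/-- Projection onto coordinates 2 and 4. -/
noncomputable def l24 (S P : Type*) : H4 S P →ₗ[ℂ] ((S → ℂ) × (P → ℂ)) :=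
  LinearMap.prod ((LinearMap.snd ℂ _ _).comp (LinearMap.fst ℂ _ _))
    ((LinearMap.snd ℂ _ _).comp (LinearMap.snd ℂ _ _))

/-- Injection into coordinates 1 and 3. -/
noncomputable def j13 (S P : Type*) : ((S → ℂ) × (P → ℂ)) →ₗ[ℂ] H4 S P :=
  LinearMap.prod ((LinearMap.inl ℂ _ _).comp (LinearMap.fst ℂ _ _))
    ((LinearMap.inl ℂ _ _).comp (LinearMap.snd ℂ _ _))

/-- Injection into coordinates 2 and 4. -/
noncomputable def j24 (S P : Type*) : ((S → ℂ) × (P → ℂ)) →ₗ[ℂ] H4 S P :=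
  LinearMap.prod ((LinearMap.inr ℂ _ _).comp (LinearMap.fst ℂ _ _))
    ((LinearMap.inr ℂ _ _).comp (LinearMap.snd ℂ _ _))

lemma perp_map_j13 (K : Submodule ℂ ((S → ℂ) × (P → ℂ))) :
    perpS (quadEquiv S P) (K.map (j13 S P)) = (pperpS K).comap (l13 S P) := by
  ext x
  rw [mem_perpS, Submodule.mem_comap, mem_pperpS]
  constructor
  · intro h u hu
    have := h (j13 S P u) ⟨u, hu, rfl⟩
    rw [inner_quadEquiv] at this
    simpa [j13, hinner_zero_left, l13] using this
  · rintro h f ⟨u, hu, rfl⟩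
    rw [inner_quadEquiv]
    have := h u hu
    simpa [j13, hinner_zero_left, l13] using this

lemma perp_map_j24 (K : Submodule ℂ ((S → ℂ) × (P → ℂ))) :
    perpS (quadEquiv S P) (K.map (j24 S P)) = (pperpS K).comap (l24 S P) := by
  ext x
  rw [mem_perpS, Submodule.mem_comap, mem_pperpS]
  constructor
  · intro h u hu
    have := h (j24 S P u) ⟨u, hu, rfl⟩
    rw [inner_quadEquiv] at this
    simpa [j24, hinner_zero_left, l24] using this
  · rintro h f ⟨u, hu, rfl⟩
    rw [inner_quadEquiv]
    have := h u hu
    simpa [j24, hinner_zero_left, l24] using this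

lemma perp_N1 (V : Submodule ℂ ((S → ℂ) × (S → ℂ))) :
    perpS (quadEquiv S P) ((pperpS V).prod (⊥ : Submodule ℂ ((P → ℂ) × (P → ℂ))))
      = V.prod (⊤ : Submodule ℂ ((P → ℂ) × (P → ℂ))) := by
  ext x
  rw [mem_perpS, Submodule.mem_prod]
  constructor
  · intro h
    refine ⟨?_, trivial⟩
    rw [← pperpS_pperpS V, mem_pperpS]
    intro u hu
    have := h (u, 0) ⟨hu, Submodule.zero_mem _⟩
    rw [inner_quadEquiv] at this
    simpa [hinner_zero_left] using this
  · rintro ⟨h1, -⟩ f hf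
    rw [Submodule.mem_prod, Submodule.mem_bot] at hf
    rw [inner_quadEquiv, hf.2]
    have hV : x.1 ∈ pperpS (pperpS V) := by rw [pperpS_pperpS]; exact h1
    have := mem_pperpS.mp hV f.1 hf.1
    simpa [hinner_zero_left] using this


lemma sup_map_eq (K K' : Submodule ℂ ((S → ℂ) × (P → ℂ))) :
    K.map (j13 S P) ⊔ K'.map (j24 S P) = K.comap (l13 S P) ⊓ K'.comap (l24 S P) := by
  apply le_antisymm
  · refine sup_le ?_ ?_
    · rintro x ⟨u, hu, rfl⟩
      refine ⟨?_, ?_⟩ <;> simp only [Submodule.mem_comap, l13, l24, j13, j24,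
        LinearMap.prod_apply, LinearMap.comp_apply, LinearMap.fst_apply,
        LinearMap.snd_apply, LinearMap.inl_apply, LinearMap.inr_apply, Function.prod]
      · simpa using hu
      · exact K'.zero_mem
    · rintro x ⟨u, hu, rfl⟩
      refine ⟨?_, ?_⟩ <;> simp only [Submodule.mem_comap, l13, l24, j13, j24,
        LinearMap.prod_apply, LinearMap.comp_apply, LinearMap.fst_apply,
        LinearMap.snd_apply, LinearMap.inl_apply, LinearMap.inr_apply, Function.prod]
      · exact K.zero_mem
      · simpa using hu
  · rintro x ⟨h13, h24⟩
    refine Submodule.mem_sup.mpr ⟨j13 S P (l13 S P x), ⟨_, h13, rfl⟩,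
      j24 S P (l24 S P x), ⟨_, h24, rfl⟩, ?_⟩
    simp [j13, j24, l13, l24, Prod.ext_iff]

lemma perp_master (T : Submodule ℂ ((S → ℂ) × (P → ℂ)))
    (V₁ : Submodule ℂ ((S → ℂ) × (S → ℂ))) :
    perpS (quadEquiv S P)
        ((V₁.prod (⊤ : Submodule ℂ ((P → ℂ) × (P → ℂ)))) ⊓
          (T.comap (l13 S P) ⊓ (pperpS T).comap (l24 S P)))
      = ((pperpS V₁).prod (⊥ : Submodule ℂ ((P → ℂ) × (P → ℂ))))
          ⊔ ((pperpS T).map (j13 S P) ⊔ T.map (j24 S P)) := by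
  have h : perpS (quadEquiv S P)
      (((pperpS V₁).prod (⊥ : Submodule ℂ ((P → ℂ) × (P → ℂ))))
        ⊔ ((pperpS T).map (j13 S P) ⊔ T.map (j24 S P)))
      = (V₁.prod (⊤ : Submodule ℂ ((P → ℂ) × (P → ℂ)))) ⊓
          (T.comap (l13 S P) ⊓ (pperpS T).comap (l24 S P)) := by
    rw [perpS_sup, perpS_sup, perp_N1, perp_map_j13, perp_map_j24, pperpS_pperpS]
  rw [← h, perpS_perpS]

lemma key (T : Submodule ℂ ((S → ℂ) × (P → ℂ)))
    (V₁ : Submodule ℂ ((S → ℂ) × (S → ℂ))) (p q : P → ℂ) :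
    (p, q) ∈ pperp (portB T (V₁ : Set ((S → ℂ) × (S → ℂ)))) ↔
      ∃ a b, (a, b) ∈ pperp (V₁ : Set ((S → ℂ) × (S → ℂ)))
        ∧ (-a, p) ∈ pperp (T : Set ((S → ℂ) × (P → ℂ))) ∧ (-b, -q) ∈ T := by
  have stepA : (p, q) ∈ pperp (portB T (V₁ : Set ((S → ℂ) × (S → ℂ)))) ↔
      ((((0 : S → ℂ), (0 : S → ℂ)), (p, -q)) : H4 S P) ∈ perpS (quadEquiv S P)
        ((V₁.prod (⊤ : Submodule ℂ ((P → ℂ) × (P → ℂ)))) ⊓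
          (T.comap (l13 S P) ⊓ (pperpS T).comap (l24 S P))) := by
    rw [mem_perpS]
    constructor
    · rintro h f ⟨hA, hC1, hC2⟩
      have hA' : f.1 ∈ V₁ := (Submodule.mem_prod.mp hA).1
      have hC1' : (f.1.1, f.2.1) ∈ T := hC1
      have hC2' : (f.1.2, f.2.2) ∈ pperpS T := hC2
      rw [inner_quadEquiv]
      have hw := h (f.2.1, -f.2.2)
        ⟨f.1.1, f.1.2, f.2.1, f.2.2, hA', hC1', mem_pperpS.mp hC2', rfl⟩
      simp only [hinner_zero_right, hinner_neg_left, hinner_neg_right] at hw ⊢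
      simpa [add_comm, add_assoc] using hw
    · rintro h w ⟨vS, iS, vP, iP, h1, h2, h3, rfl⟩
      have := h ((vS, iS), (vP, iP)) ⟨⟨h1, trivial⟩, ⟨h2, mem_pperpS.mpr h3⟩⟩
      rw [inner_quadEquiv] at this
      simp only [hinner_zero_right, hinner_neg_left, hinner_neg_right] at this ⊢
      simpa [add_comm, add_assoc] using this
  rw [stepA, perp_master, Submodule.mem_sup]
  constructor
  · rintro ⟨y, hy, z, hz, hsum⟩
    obtain ⟨z1, hz1, z2, hz2, rfl⟩ := Submodule.mem_sup.mp hz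
    obtain ⟨u, hu, rfl⟩ := hz1
    obtain ⟨v, hv, rfl⟩ := hz2
    obtain ⟨⟨y11, y12⟩, y21, y22⟩ := y
    obtain ⟨u1, u2⟩ := u
    obtain ⟨v1, v2⟩ := v
    obtain ⟨hy1, hy2⟩ := hy
    simp only [j13, j24, LinearMap.prod_apply, LinearMap.comp_apply,
      LinearMap.fst_apply, LinearMap.snd_apply, LinearMap.inl_apply,
      LinearMap.inr_apply, Function.prod, Prod.mk_add_mk, Prod.mk.injEq] at hsum
    obtain ⟨⟨e1, e2⟩, e3, e4⟩ := hsum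
    have hy2' : y21 = 0 ∧ y22 = 0 := by
      have : ((y21, y22) : (P → ℂ) × (P → ℂ)) = 0 := hy2
      simpa [Prod.ext_iff] using this
    have hu1 : u1 = -y11 := by rw [add_zero] at e1; exact eq_neg_of_add_eq_zero_right e1
    have hv1 : v1 = -y12 := by rw [zero_add] at e2; exact eq_neg_of_add_eq_zero_right e2
    have hu2 : u2 = p := by rw [add_zero, hy2'.1, zero_add] at e3; exact e3
    have hv2 : v2 = -q := by rw [zero_add, hy2'.2, zero_add] at e4; exact e4
    refine ⟨y11, y12, mem_pperpS.mp hy1, ?_, ?_⟩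
    · rw [← hu1, ← hu2]; exact mem_pperpS.mp hu
    · rw [← hv1, ← hv2]; exact hv
  · rintro ⟨a, b, hab, haT, hbT⟩
    refine ⟨((a, b), (0, 0)),
      Submodule.mem_prod.mpr ⟨mem_pperpS.mpr hab, Submodule.zero_mem _⟩,
      j13 S P (-a, p) + j24 S P (-b, -q),
      Submodule.add_mem_sup ⟨(-a, p), mem_pperpS.mpr haT, rfl⟩
        ⟨(-b, -q), hbT, rfl⟩, ?_⟩
    simp only [j13, j24, LinearMap.prod_apply, LinearMap.comp_apply,
      LinearMap.fst_apply, LinearMap.snd_apply, LinearMap.inl_apply,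
      LinearMap.inr_apply, Function.prod, Prod.mk_add_mk, Prod.mk.injEq]
    constructor
    · constructor <;> abel
    · constructor <;> abel

end main
end St7

theorem statement7 (S P : Type*) [Fintype S] [Fintype P]
    (T : Submodule ℂ ((S → ℂ) × (P → ℂ)))
    (V₁ V₂ : Submodule ℂ ((S → ℂ) × (S → ℂ)))
    (hadj : (V₂ : Set ((S → ℂ) × (S → ℂ))) = adjSet (V₁ : Set ((S → ℂ) × (S → ℂ)))) :
    portB T (V₂ : Set ((S → ℂ) × (S → ℂ)))
      = adjSet (portB T (V₁ : Set ((S → ℂ) × (S → ℂ)))) := by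
  ext w
  rw [show portB T (V₂ : Set ((S → ℂ) × (S → ℂ)))
      = portB T (adjSet (V₁ : Set ((S → ℂ) × (S → ℂ)))) by rw [hadj]]
  constructor
  · rintro ⟨vS, iS, vP, iP, hK, hT, hTp, rfl⟩
    have hK' : (-iS, vS) ∈ pperp (V₁ : Set ((S → ℂ) × (S → ℂ))) := hK
    simp only [adjSet, Set.mem_setOf_eq, neg_neg]
    rw [St7.key]
    refine ⟨-iS, vS, hK', ?_, ?_⟩
    · simp only [neg_neg]; exact hTp
    · simpa using T.neg_mem hT
  · intro hw
    have hw' : (-w.2, w.1) ∈ pperp (portB T (V₁ : Set ((S → ℂ) × (S → ℂ)))) := hw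
    rw [St7.key] at hw'
    obtain ⟨a, b, hab, haT, hbT⟩ := hw'
    refine ⟨b, -a, w.1, -w.2, ?_, ?_, ?_, ?_⟩
    · show (-(-a), b) ∈ pperp (V₁ : Set ((S → ℂ) × (S → ℂ)))
      simpa only [neg_neg] using hab
    · simpa using T.neg_mem hbT
    · exact haT
    · simp
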